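/- Suppose x = x(τ) is a solution of a proper gDH system with pairwise non-coincident components, and define t(τ) = −(x₂−x₃)/(x₁−x₂). Then ṫ = c·n̄·ρ·(x₁−x₂)(x₂−x₃)(x₃−x₁)/(x₁−x₂)², i.e. ṫ = c·n̄·ρ·(x₂−x₃)(x₃−x₁)/(x₁−x₂), where ρ = (c−a₁−a₂−a₃)/(2c−b₁−b₂−b₃) and n̄ = (2c−b₁−b₂−b₃)/c. -/

import Mathlib

/-- for a noncoincident solution of a proper gDH system,
`t = −(x₂−x₃)/(x₁−x₂)` satisfies `ṫ = c·n̄·ρ·(x₂−x₃)(x₃−x₁)/(x₁−x₂)`. -/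
theorem stmt_7 (a₁ a₂ a₃ b₁ b₂ b₃ c : ℂ)
    (hc : c ≠ 0) (hS : c - a₁ - a₂ - a₃ ≠ 0) (hB : 2 * c - b₁ - b₂ - b₃ ≠ 0)
    (x₁ x₂ x₃ : ℂ → ℂ) (τ : ℂ)
    (h₁ : HasDerivAt x₁ (-a₁ * (x₁ τ - x₂ τ) * (x₃ τ - x₁ τ)
        + (b₁ * x₂ τ * x₃ τ + b₂ * x₃ τ * x₁ τ + b₃ * x₁ τ * x₂ τ)
        - c * (x₂ τ * x₃ τ)) τ)
    (h₂ : HasDerivAt x₂ (-a₂ * (x₂ τ - x₃ τ) * (x₁ τ - x₂ τ)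
        + (b₁ * x₂ τ * x₃ τ + b₂ * x₃ τ * x₁ τ + b₃ * x₁ τ * x₂ τ)
        - c * (x₃ τ * x₁ τ)) τ)
    (h₃ : HasDerivAt x₃ (-a₃ * (x₃ τ - x₁ τ) * (x₂ τ - x₃ τ)
        + (b₁ * x₂ τ * x₃ τ + b₂ * x₃ τ * x₁ τ + b₃ * x₁ τ * x₂ τ)
        - c * (x₁ τ * x₂ τ)) τ)
    (h12 : x₁ τ ≠ x₂ τ) (h23 : x₂ τ ≠ x₃ τ) (h31 : x₃ τ ≠ x₁ τ) :
    HasDerivAt (fun s => -(x₂ s - x₃ s) / (x₁ s - x₂ s))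
      (c * ((2 * c - b₁ - b₂ - b₃) / c) * ((c - a₁ - a₂ - a₃) / (2 * c - b₁ - b₂ - b₃))
        * ((x₂ τ - x₃ τ) * (x₃ τ - x₁ τ) / (x₁ τ - x₂ τ))) τ := by
  have hd : x₁ τ - x₂ τ ≠ 0 := sub_ne_zero.mpr h12
  have hnum := ((h₂.sub h₃).neg)
  have hden := (h₁.sub h₂)
  have := hnum.div hden hd
  convert this using 1
  all_goals try rfl
  simp only [Pi.sub_apply, Pi.neg_apply]
  rw [show c * ((2 * c - b₁ - b₂ - b₃) / c) * ((c - a₁ - a₂ - a₃) / (2 * c - b₁ - b₂ - b₃))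
      = c - a₁ - a₂ - a₃ by rw [mul_div_cancel₀ _ hc, mul_div_cancel₀ _ hB]]
  rw [mul_div_assoc', div_eq_div_iff hd (pow_ne_zero 2 hd)]
  ring
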